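/- Let R be a commutative ring and p a nonzero weakly prime element of R. Then either p is prime or p^2 = 0. -/
import Mathlib

theorem weakly_prime_is_prime_or_sq_zero {R : Type*} [CommRing R] (p : R)
    (hp0 : p ≠ 0) (hpu : ¬IsUnit p)
    (hwp : ∀ a b : R, p ∣ a * b → a * b ≠ 0 → p ∣ a ∨ p ∣ b) :
    Prime p ∨ p ^ 2 = 0 := by
  by_cases hsq : p ^ 2 = 0
  · exact Or.inr hsq
  left
  refine ⟨hp0, hpu, fun a b hab => ?_⟩
  by_cases h0 : a * b = 0
  · by_cases hpb : p * b = 0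
    · by_cases hap : a * p = 0
      · -- (a+p)(b+p) = ab + ap + pb + p^2 = p^2 ≠ 0
        have key : (a + p) * (b + p) = p ^ 2 := by ring_nf; rw [hap, h0, hpb]; ring
        have h1 : p ∣ (a + p) * (b + p) := key ▸ Dvd.intro p (by ring)
        have h2 : (a + p) * (b + p) ≠ 0 := key ▸ hsq
        rcases hwp _ _ h1 h2 with h | h
        · exact Or.inl (by simpa using (dvd_sub h (dvd_refl p)))
        · exact Or.inr (by simpa using (dvd_sub h (dvd_refl p)))
      · -- a(b+p) = ap ≠ 0, p ∣ it
        have key : a * (b + p) = a * p := by rw [mul_add, h0, zero_add]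
        have h1 : p ∣ a * (b + p) := key ▸ Dvd.intro a (mul_comm p a)
        rcases hwp _ _ h1 (key ▸ hap) with h | h
        · exact Or.inl h
        · exact Or.inr (by simpa using (dvd_sub h (dvd_refl p)))
    · -- (a+p)b = pb ≠ 0
      have key : (a + p) * b = p * b := by rw [add_mul, h0, zero_add]
      have h1 : p ∣ (a + p) * b := key ▸ Dvd.intro b rfl
      rcases hwp _ _ h1 (key ▸ hpb) with h | h
      · exact Or.inl (by simpa using (dvd_sub h (dvd_refl p)))
      · exact Or.inr h
  · exact hwp a b hab h0
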